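/- arXiv:2603.17197 — 2 statements merged into one kernel-verified Lean document; each statement's English description precedes it below -/
import Mathlib

section
/- If Y : [0,T] → ℝ^{n×n} is differentiable with Y(0) = 0 and ‖Y'(t)‖ ≤ c₁‖Y(t)‖² + c₂ for all t ∈ [0,T] (with any norm on matrices), and if T < π/(2√(c₁c₂)), then ‖Y(t)‖ ≤ √(c₂/c₁)·tan(√(c₁c₂)·t) for all t ∈ [0,T]. -/
open Real Set

/-- Comparison bound: if Y(0) = 0 and ‖Y'(t)‖ ≤ c₁‖Y(t)‖² + c₂ on [0,T] with
T < π/(2√(c₁c₂)), then ‖Y(t)‖ ≤ √(c₂/c₁)·tan(√(c₁c₂)·t) on [0,T]. -/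
theorem stmt_2 {E : Type*} [NormedAddCommGroup E] [NormedSpace ℝ E]
    (c₁ c₂ T : ℝ) (hc₁ : 0 < c₁) (hc₂ : 0 < c₂) (hT0 : 0 < T)
    (hT : T < Real.pi / (2 * Real.sqrt (c₁ * c₂)))
    (Y : ℝ → E) (Y' : ℝ → E)
    (hY0 : Y 0 = 0)
    (hderiv : ∀ t ∈ Set.Icc (0 : ℝ) T, HasDerivAt Y (Y' t) t)
    (hbound : ∀ t ∈ Set.Icc (0 : ℝ) T, ‖Y' t‖ ≤ c₁ * ‖Y t‖ ^ 2 + c₂) :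
    ∀ t ∈ Set.Icc (0 : ℝ) T,
      ‖Y t‖ ≤ Real.sqrt (c₂ / c₁) * Real.tan (Real.sqrt (c₁ * c₂) * t) := by
  set k := Real.sqrt (c₁ * c₂) with hk
  have hkpos : 0 < k := Real.sqrt_pos.2 (mul_pos hc₁ hc₂)
  set s := Real.sqrt (c₂ / c₁) with hs
  have hs2 : c₁ * s ^ 2 = c₂ := by
    rw [hs, Real.sq_sqrt (div_pos hc₂ hc₁).le]
    field_simp
  have hsk : s * k = c₂ := by
    rw [hs, hk, ← Real.sqrt_mul (div_pos hc₂ hc₁).le,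
      show c₂ / c₁ * (c₁ * c₂) = c₂ ^ 2 by field_simp]
    exact Real.sqrt_sq hc₂.le
  have hkT : k * T < Real.pi / 2 := by
    have := (lt_div_iff₀ (by positivity : (0:ℝ) < 2 * k)).1 hT
    nlinarith
  have hcos : ∀ x ∈ Icc (0:ℝ) T, 0 < Real.cos (k * x) := by
    intro x hx
    apply Real.cos_pos_of_mem_Ioo
    constructor
    · nlinarith [Real.pi_pos, hx.1, hkpos.le]
    · calc k * x ≤ k * T := by nlinarith [hx.2]
        _ < _ := hkT
  set B : ℝ → ℝ := fun t => s * Real.tan (k * t) with hBdef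
  have hBderiv : ∀ x ∈ Icc (0:ℝ) T, HasDerivAt B (c₁ * B x ^ 2 + c₂) x := by
    intro x hx
    have hc := (hcos x hx).ne'
    have h0 : HasDerivAt (fun t : ℝ => k * t) k x := by
      simpa using (hasDerivAt_id x).const_mul k
    have h1 : HasDerivAt (fun t => Real.tan (k * t)) (1 / Real.cos (k*x) ^ 2 * k) x :=
      (Real.hasDerivAt_tan hc).comp x h0
    have h2 := h1.const_mul s
    refine h2.congr_deriv ?_
    have htan : Real.tan (k*x) ^ 2 + 1 = 1 / Real.cos (k*x) ^ 2 := by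
      rw [Real.tan_eq_sin_div_cos]
      field_simp
      exact Real.sin_sq_add_cos_sq _

    show s * (1 / Real.cos (k*x) ^ 2 * k) = c₁ * (s * Real.tan (k*x)) ^ 2 + c₂
    nlinarith [htan]
  -- bound on ‖Y‖
  have hYcont : ContinuousOn Y (Icc 0 T) :=
    fun t ht => (hderiv t ht).continuousAt.continuousWithinAt
  obtain ⟨K, hK⟩ := isCompact_Icc.exists_bound_of_continuousOn hYcont
  have hK0 : 0 ≤ K := le_trans (norm_nonneg _) (hK 0 (by constructor <;> linarith))
  set M : ℝ := c₁ * (2 * K + 1) + 1 with hM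
  have hMpos : 0 < M := by positivity
  -- perturbed bound
  have key : ∀ ε : ℝ, 0 < ε → ε ≤ Real.exp (-(M * T)) →
      ∀ t ∈ Icc (0:ℝ) T, ‖Y t‖ ≤ B t + ε * Real.exp (M * t) := by
    intro ε hε hε'
    set Bε : ℝ → ℝ := fun t => B t + ε * Real.exp (M * t) with hBε
    have hBεderiv : ∀ x ∈ Icc (0:ℝ) T,
        HasDerivAt Bε (c₁ * B x ^ 2 + c₂ + ε * (M * Real.exp (M * x))) x := by
      intro x hx
      have he : HasDerivAt (fun t : ℝ => Real.exp (M * t)) (Real.exp (M * x) * M) x :=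
        (Real.hasDerivAt_exp _).comp x (by simpa using (hasDerivAt_id x).const_mul M)
      have := (hBderiv x hx).add (he.const_mul ε)
      refine this.congr_deriv ?_
      ring
    have := image_norm_le_of_norm_deriv_right_lt_deriv_boundary'
      (f := Y) (f' := Y') (a := 0) (b := T)
      hYcont (fun x hx => (hderiv x (Ico_subset_Icc_self hx)).hasDerivWithinAt)
      (B := Bε) (B' := fun x => c₁ * B x ^ 2 + c₂ + ε * (M * Real.exp (M * x)))
      (by simp [hBε, hBdef, hY0]; positivity)
      (fun x hx => (hBεderiv x hx).continuousAt.continuousWithinAt)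
      (fun x hx => (hBεderiv x (Ico_subset_Icc_self hx)).hasDerivWithinAt)
      ?_
    · exact fun t ht => this ht
    intro x hx hEq
    have hxI : x ∈ Icc (0:ℝ) T := Ico_subset_Icc_self hx
    have hbx := hbound x hxI
    have hKx := hK x hxI
    set e := Real.exp (M * x) with he
    have hepos : 0 < e := Real.exp_pos _
    have heb : ε * e ≤ 1 := by
      have : e ≤ Real.exp (M * T) := Real.exp_le_exp.2 (by nlinarith [hx.2.le, hx.1])
      calc ε * e ≤ Real.exp (-(M*T)) * Real.exp (M*T) := by
              apply mul_le_mul hε' this hepos.le (Real.exp_pos _).le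
        _ = 1 := by rw [← Real.exp_add]; simp
    have hBx : B x = ‖Y x‖ - ε * e := by rw [hEq]; simp [hBε, he]
    have hlt : c₁ * ‖Y x‖ ^ 2 + c₂ < c₁ * B x ^ 2 + c₂ + ε * (M * e) := by
      rw [hBx]
      have h1 : ‖Y x‖ ≤ K := hKx
      have h5 : 0 ≤ ε * e * (c₁ * (K - ‖Y x‖)) :=
        mul_nonneg (mul_nonneg hε.le hepos.le) (mul_nonneg hc₁.le (by linarith))
      have h6 : 0 ≤ c₁ * (ε * e) ^ 2 := by positivity
      have h7 : 0 < ε * e := mul_pos hε hepos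
      nlinarith [hM]
    exact lt_of_le_of_lt hbx hlt
  -- take ε → 0
  intro t ht
  refine le_of_forall_pos_le_add ?_
  intro η hη
  set ε := min (Real.exp (-(M * T))) (η / Real.exp (M * t)) with hεdef
  have hεpos : 0 < ε := lt_min (Real.exp_pos _) (by positivity)
  have h1 := key ε hεpos (min_le_left _ _) t ht
  have h2 : ε * Real.exp (M * t) ≤ η := by
    have : ε ≤ η / Real.exp (M * t) := min_le_right _ _
    rw [le_div_iff₀ (Real.exp_pos _)] at this
    exact this
  have h3 : B t = s * Real.tan (k * t) := rfl
  linarith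
end

section
/- Consider the coupled Riccati system θ̇ᴬ = θᴬRᴬθᴬ + θᴬR_Bθᴮ + θᴮR_Bθᴬ - Qᴬ, θ̇ᴮ = θᴮR_Bθᴮ + θᴬRᴬθᴮ + θᴮRᴬθᴬ - Q_B with terminal conditions θᴬ(T) = θᴮ(T) = 0, where Rᴬ = diag(1/rᴬ, 0), R_B = diag(0, 1/r_B), and Qᴬ, Q_B as in the text. If T ≤ (c₁c₂)^{-1/2}·arctan((1+m_A²+m_B²)(c₂/c₁)^{-1/2}) with c₁ = 5√(rᴬ⁻² + r_B⁻²) and c₂ = √(qᴬ² + q_B²)(1 + m_A² + m_B²), then any solution on [0,T] satisfies ‖diag(θᴬ(t), θᴮ(t))‖_F ≤ 1 + m_A² + m_B². -/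
open Set Real

attribute [local instance] Matrix.frobeniusNormedAddCommGroup Matrix.frobeniusNormedSpace

noncomputable def frobSq {n : ℕ} (M : Matrix (Fin n) (Fin n) ℝ) : ℝ :=
  ∑ i, ∑ j, (M i j) ^ 2

attribute [local instance] Matrix.frobeniusNormedRing

private lemma frobSq_nonneg {n : ℕ} (M : Matrix (Fin n) (Fin n) ℝ) : 0 ≤ frobSq M :=
  Finset.sum_nonneg fun _ _ => Finset.sum_nonneg fun _ _ => sq_nonneg _

private lemma norm_eq_sqrt_frobSq {n : ℕ} (M : Matrix (Fin n) (Fin n) ℝ) :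
    ‖M‖ = Real.sqrt (frobSq M) := by
  rw [Matrix.frobenius_norm_def, Real.sqrt_eq_rpow, frobSq]
  congr 1
  refine Finset.sum_congr rfl fun i _ => Finset.sum_congr rfl fun j _ => ?_
  rw [Real.rpow_two, Real.norm_eq_abs, sq_abs]

private lemma sq_norm_eq_frobSq {n : ℕ} (M : Matrix (Fin n) (Fin n) ℝ) :
    ‖M‖ ^ 2 = frobSq M := by
  rw [norm_eq_sqrt_frobSq, Real.sq_sqrt (frobSq_nonneg M)]

private lemma norm_fin2 (a b c d : ℝ) :
    ‖(!![a, b; c, d] : Matrix (Fin 2) (Fin 2) ℝ)‖ = Real.sqrt (a^2 + b^2 + c^2 + d^2) := by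
  rw [norm_eq_sqrt_frobSq]
  congr 1
  simp [frobSq, Fin.sum_univ_two]
  ring

private lemma mul3_norm (X R Y : Matrix (Fin 2) (Fin 2) ℝ) :
    ‖X * R * Y‖ ≤ ‖X‖ * ‖R‖ * ‖Y‖ :=
  le_trans (norm_mul_le _ _) (mul_le_mul_of_nonneg_right (norm_mul_le _ _) (norm_nonneg _))

private lemma sqrt_bound (a b dA dB x y ρ qa qb S : ℝ)
    (ha : 0 ≤ a) (hb : 0 ≤ b) (hx : 0 ≤ x) (hy : 0 ≤ y) (hxρ : x ≤ ρ) (hyρ : y ≤ ρ)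
    (hqa : 0 ≤ qa) (hqb : 0 ≤ qb)
    (h1 : dA ≤ a^2*x + 2*(a*b)*y + qa) (h2 : dB ≤ b^2*y + 2*(a*b)*x + qb)
    (hdA : 0 ≤ dA) (hdB : 0 ≤ dB)
    (hS : Real.sqrt (qa^2 + qb^2) ≤ S) :
    Real.sqrt (dA^2 + dB^2) ≤ 3*ρ*(a^2+b^2) + S := by
  set s0 := Real.sqrt (qa^2 + qb^2) with hs0
  have hs00 : 0 ≤ s0 := Real.sqrt_nonneg _
  have hqas : qa ≤ s0 := by
    have := Real.sqrt_le_sqrt (show qa^2 ≤ qa^2 + qb^2 by nlinarith)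
    rwa [Real.sqrt_sq hqa] at this
  have hqbs : qb ≤ s0 := by
    have := Real.sqrt_le_sqrt (show qb^2 ≤ qa^2 + qb^2 by nlinarith)
    rwa [Real.sqrt_sq hqb] at this
  have hsq : s0^2 = qa^2 + qb^2 := Real.sq_sqrt (by positivity)
  have hρ0 : 0 ≤ ρ := le_trans hx hxρ
  set uA := a^2*x + 2*(a*b)*y with huA
  set uB := b^2*y + 2*(a*b)*x with huB
  have huA0 : 0 ≤ uA := by positivity
  have huB0 : 0 ≤ uB := by positivity
  have hsum : uA + uB ≤ 3*ρ*(a^2+b^2) := by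
    have e1 := mul_le_mul_of_nonneg_left hxρ (sq_nonneg a)
    have e2 := mul_le_mul_of_nonneg_left hyρ (sq_nonneg b)
    have e3 := mul_le_mul_of_nonneg_left hxρ (mul_nonneg ha hb)
    have e4 := mul_le_mul_of_nonneg_left hyρ (mul_nonneg ha hb)
    nlinarith [mul_nonneg hρ0 (sq_nonneg (a - b))]
  have key : dA^2 + dB^2 ≤ (uA + uB + s0)^2 := by
    nlinarith [pow_le_pow_left₀ hdA h1 2, pow_le_pow_left₀ hdB h2 2,
      mul_le_mul_of_nonneg_left hqas huA0, mul_le_mul_of_nonneg_left hqbs huB0,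
      mul_nonneg huA0 huB0]
  calc Real.sqrt (dA^2 + dB^2) ≤ Real.sqrt ((uA + uB + s0)^2) := Real.sqrt_le_sqrt key
    _ = uA + uB + s0 := Real.sqrt_sq (by positivity)
    _ ≤ 3*ρ*(a^2+b^2) + S := by linarith

set_option maxHeartbeats 1000000 in
/-- A priori bound for the coupled Riccati system: if
T ≤ (c₁c₂)^{-1/2}·arctan((1+m_A²+m_B²)(c₂/c₁)^{-1/2}), then any solution
satisfies ‖diag(θᴬ(t), θᴮ(t))‖_F ≤ 1 + m_A² + m_B². -/
theorem stmt_11 (qA qB rA rB mA mB T : ℝ)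
    (hqA : 0 < qA) (hqB : 0 < qB) (hrA : 0 < rA) (hrB : 0 < rB) (hT0 : 0 < T)
    (QA QB RA RB : Matrix (Fin 2) (Fin 2) ℝ)
    (hQA : QA = qA • !![1, -mA; -mA, mA ^ 2])
    (hQB : QB = qB • !![mB ^ 2, -mB; -mB, 1])
    (hRA : RA = !![1 / rA, 0; 0, 0])
    (hRB : RB = !![0, 0; 0, 1 / rB])
    (c₁ c₂ : ℝ)
    (hc₁ : c₁ = 5 * Real.sqrt (rA⁻¹ ^ 2 + rB⁻¹ ^ 2))
    (hc₂ : c₂ = Real.sqrt (qA ^ 2 + qB ^ 2) * (1 + mA ^ 2 + mB ^ 2))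
    (hT : T ≤ (Real.sqrt (c₁ * c₂))⁻¹ *
      Real.arctan ((1 + mA ^ 2 + mB ^ 2) * (Real.sqrt (c₂ / c₁))⁻¹))
    (θA θB : ℝ → Matrix (Fin 2) (Fin 2) ℝ)
    (hterm : θA T = 0 ∧ θB T = 0)
    (hderivA : ∀ t ∈ Set.Icc (0 : ℝ) T,
      HasDerivAt θA (θA t * RA * θA t + θA t * RB * θB t + θB t * RB * θA t - QA) t)
    (hderivB : ∀ t ∈ Set.Icc (0 : ℝ) T,
      HasDerivAt θB (θB t * RB * θB t + θA t * RA * θB t + θB t * RA * θA t - QB) t) :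
    ∀ t ∈ Set.Icc (0 : ℝ) T,
      Real.sqrt (frobSq (θA t) + frobSq (θB t)) ≤ 1 + mA ^ 2 + mB ^ 2 := by
  obtain ⟨htA, htB⟩ := hterm
  set K : ℝ := 1 + mA ^ 2 + mB ^ 2 with hKdef
  have hK1 : (1:ℝ) ≤ K := by simp only [hKdef]; nlinarith [sq_nonneg mA, sq_nonneg mB]
  have hK0 : (0:ℝ) < K := lt_of_lt_of_le one_pos hK1
  set ρ : ℝ := Real.sqrt (rA⁻¹ ^ 2 + rB⁻¹ ^ 2) with hρdef
  have hρ0 : 0 < ρ := Real.sqrt_pos.2 (by positivity)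
  have hc₁0 : 0 < c₁ := by rw [hc₁]; positivity
  have hc₂0 : 0 < c₂ := by
    rw [hc₂]
    exact mul_pos (Real.sqrt_pos.2 (by positivity)) hK0
  set ω : ℝ := Real.sqrt (c₁ * c₂) with hωdef
  have hω0 : 0 < ω := Real.sqrt_pos.2 (mul_pos hc₁0 hc₂0)
  set γ : ℝ := Real.sqrt (c₂ / c₁) with hγdef
  have hγ0 : 0 < γ := Real.sqrt_pos.2 (div_pos hc₂0 hc₁0)
  have hγω : γ * ω = c₂ := by
    rw [hγdef, hωdef, ← Real.sqrt_mul (div_pos hc₂0 hc₁0).le,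
      show c₂ / c₁ * (c₁ * c₂) = c₂ ^ 2 by field_simp]
    exact Real.sqrt_sq hc₂0.le
  have hc₁γ2 : c₁ * γ ^ 2 = c₂ := by
    rw [hγdef, Real.sq_sqrt (div_pos hc₂0 hc₁0).le]
    field_simp
  have hωT : ω * T ≤ arctan (K * γ⁻¹) := by
    calc ω * T ≤ ω * (ω⁻¹ * arctan (K * γ⁻¹)) := mul_le_mul_of_nonneg_left hT hω0.le
      _ = arctan (K * γ⁻¹) := by field_simp
  have hωTpi : ω * T < π / 2 := lt_of_le_of_lt hωT (arctan_lt_pi_div_two _)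
  set δ₀ : ℝ := π / 2 - ω * T with hδ₀def
  have hδ₀0 : 0 < δ₀ := by simp only [hδ₀def]; linarith
  -- norms of the constant matrices
  have hRAn : ‖RA‖ = rA⁻¹ := by
    rw [hRA, norm_fin2, show (1/rA)^2 + 0^2 + 0^2 + 0^2 = (rA⁻¹)^2 by rw [one_div]; ring,
      Real.sqrt_sq (by positivity)]
  have hRBn : ‖RB‖ = rB⁻¹ := by
    rw [hRB, norm_fin2, show 0^2 + 0^2 + 0^2 + (1/rB)^2 = (rB⁻¹)^2 by rw [one_div]; ring,
      Real.sqrt_sq (by positivity)]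
  have hQAn : ‖QA‖ = qA * (1 + mA^2) := by
    rw [hQA, norm_smul, norm_fin2, Real.norm_eq_abs, abs_of_pos hqA,
      show (1:ℝ)^2 + (-mA)^2 + (-mA)^2 + (mA^2)^2 = ((1+mA^2)^2 : ℝ) by ring,
      Real.sqrt_sq (by positivity)]
  have hQBn : ‖QB‖ = qB * (1 + mB^2) := by
    rw [hQB, norm_smul, norm_fin2, Real.norm_eq_abs, abs_of_pos hqB,
      show (mB^2)^2 + (-mB)^2 + (-mB)^2 + (1:ℝ)^2 = ((1+mB^2)^2 : ℝ) by ring,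
      Real.sqrt_sq (by positivity)]
  have hxρ : rA⁻¹ ≤ ρ := by
    rw [hρdef]
    have := Real.sqrt_le_sqrt (show rA⁻¹^2 ≤ rA⁻¹^2 + rB⁻¹^2 by nlinarith [sq_nonneg rB⁻¹])
    rwa [Real.sqrt_sq (by positivity)] at this
  have hyρ : rB⁻¹ ≤ ρ := by
    rw [hρdef]
    have := Real.sqrt_le_sqrt (show rB⁻¹^2 ≤ rA⁻¹^2 + rB⁻¹^2 by nlinarith [sq_nonneg rA⁻¹])
    rwa [Real.sqrt_sq (by positivity)] at this
  have hSc₂ : Real.sqrt ((qA * (1+mA^2))^2 + (qB * (1+mB^2))^2) ≤ c₂ := by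
    have h1 : (1+mA^2)^2 ≤ K^2 := by simp only [hKdef]; nlinarith [sq_nonneg mB, sq_nonneg mA]
    have h2 : (1+mB^2)^2 ≤ K^2 := by simp only [hKdef]; nlinarith [sq_nonneg mB, sq_nonneg mA]
    have hle : (qA * (1+mA^2))^2 + (qB * (1+mB^2))^2 ≤ (qA^2 + qB^2) * K^2 := by
      have e1 := mul_le_mul_of_nonneg_left h1 (sq_nonneg qA)
      have e2 := mul_le_mul_of_nonneg_left h2 (sq_nonneg qB)
      calc (qA * (1+mA^2))^2 + (qB * (1+mB^2))^2
          = qA^2 * (1+mA^2)^2 + qB^2 * (1+mB^2)^2 := by ring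
        _ ≤ qA^2 * K^2 + qB^2 * K^2 := add_le_add e1 e2
        _ = (qA^2 + qB^2) * K^2 := by ring
    calc Real.sqrt ((qA * (1+mA^2))^2 + (qB * (1+mB^2))^2)
        ≤ Real.sqrt ((qA^2 + qB^2) * K^2) := Real.sqrt_le_sqrt hle
      _ = Real.sqrt (qA^2 + qB^2) * K := by
          rw [Real.sqrt_mul (by positivity), Real.sqrt_sq hK0.le]
      _ = c₂ := hc₂.symm
  -- the reversed-time solution in the L² product space
  let e := WithLp.prodContinuousLinearEquiv 2 ℝ (Matrix (Fin 2) (Fin 2) ℝ) (Matrix (Fin 2) (Fin 2) ℝ)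
  set DA : ℝ → Matrix (Fin 2) (Fin 2) ℝ := fun u => θA u * RA * θA u + θA u * RB * θB u + θB u * RB * θA u - QA
    with hDAdef
  set DB : ℝ → Matrix (Fin 2) (Fin 2) ℝ := fun u => θB u * RB * θB u + θA u * RA * θB u + θB u * RA * θA u - QB
    with hDBdef
  set f : ℝ → WithLp 2 (Matrix (Fin 2) (Fin 2) ℝ × Matrix (Fin 2) (Fin 2) ℝ) := fun s => e.symm (θA (T - s), θB (T - s)) with hfdef
  set F : ℝ → WithLp 2 (Matrix (Fin 2) (Fin 2) ℝ × Matrix (Fin 2) (Fin 2) ℝ) := fun s => e.symm (-DA (T - s), -DB (T - s)) with hFdef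
  have hnorm : ∀ A B : Matrix (Fin 2) (Fin 2) ℝ, ‖(e.symm (A, B) : WithLp 2 (Matrix (Fin 2) (Fin 2) ℝ × Matrix (Fin 2) (Fin 2) ℝ))‖ = Real.sqrt (‖A‖^2 + ‖B‖^2) :=
    fun A B => WithLp.prod_norm_eq_of_L2 _
  haveI : ContinuousSMul ℝ (WithLp 2 (Matrix (Fin 2) (Fin 2) ℝ × Matrix (Fin 2) (Fin 2) ℝ)) :=
    NormedSpace.toIsBoundedSMul.continuousSMul
  have hF : ∀ s ∈ Icc (0:ℝ) T, HasDerivAt f (F s) s := by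
    intro s hs
    have hmem : T - s ∈ Icc (0:ℝ) T := ⟨by linarith [hs.2], by linarith [hs.1]⟩
    have hA := (hderivA (T - s) hmem).comp_const_sub T s
    have hB := (hderivB (T - s) hmem).comp_const_sub T s
    exact (e.symm.hasFDerivAt).comp_hasDerivAt s (hA.prodMk hB)
  -- the derivative norm bound
  have hDbound : ∀ x ∈ Icc (0:ℝ) T,
      ‖F x‖ ≤ 3 * ρ * (‖θA (T-x)‖^2 + ‖θB (T-x)‖^2) + c₂ := by
    intro x hx
    set a := ‖θA (T-x)‖ with hadef
    set b := ‖θB (T-x)‖ with hbdef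
    have hdA : ‖DA (T-x)‖ ≤ a^2*rA⁻¹ + 2*(a*b)*rB⁻¹ + qA*(1+mA^2) := by
      have t1 : ‖θA (T-x) * RA * θA (T-x)‖ ≤ a^2*rA⁻¹ :=
        (mul3_norm _ _ _).trans_eq (by rw [hRAn]; ring)
      have t2 : ‖θA (T-x) * RB * θB (T-x)‖ ≤ (a*b)*rB⁻¹ :=
        (mul3_norm _ _ _).trans_eq (by rw [hRBn]; ring)
      have t3 : ‖θB (T-x) * RB * θA (T-x)‖ ≤ (a*b)*rB⁻¹ :=
        (mul3_norm _ _ _).trans_eq (by rw [hRBn]; ring)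
      calc ‖DA (T-x)‖ ≤ ‖θA (T-x) * RA * θA (T-x) + θA (T-x) * RB * θB (T-x)
            + θB (T-x) * RB * θA (T-x)‖ + ‖QA‖ := norm_sub_le _ _
        _ ≤ ‖θA (T-x) * RA * θA (T-x)‖ + ‖θA (T-x) * RB * θB (T-x)‖
            + ‖θB (T-x) * RB * θA (T-x)‖ + ‖QA‖ := by
              gcongr
              exact (norm_add_le _ _).trans (by gcongr; exact norm_add_le _ _)
        _ ≤ a^2*rA⁻¹ + 2*(a*b)*rB⁻¹ + qA*(1+mA^2) := by
              rw [hQAn]; linarith [t1, t2, t3]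
    have hdB : ‖DB (T-x)‖ ≤ b^2*rB⁻¹ + 2*(a*b)*rA⁻¹ + qB*(1+mB^2) := by
      have t1 : ‖θB (T-x) * RB * θB (T-x)‖ ≤ b^2*rB⁻¹ :=
        (mul3_norm _ _ _).trans_eq (by rw [hRBn]; ring)
      have t2 : ‖θA (T-x) * RA * θB (T-x)‖ ≤ (a*b)*rA⁻¹ :=
        (mul3_norm _ _ _).trans_eq (by rw [hRAn]; ring)
      have t3 : ‖θB (T-x) * RA * θA (T-x)‖ ≤ (a*b)*rA⁻¹ :=
        (mul3_norm _ _ _).trans_eq (by rw [hRAn]; ring)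
      calc ‖DB (T-x)‖ ≤ ‖θB (T-x) * RB * θB (T-x) + θA (T-x) * RA * θB (T-x)
            + θB (T-x) * RA * θA (T-x)‖ + ‖QB‖ := norm_sub_le _ _
        _ ≤ ‖θB (T-x) * RB * θB (T-x)‖ + ‖θA (T-x) * RA * θB (T-x)‖
            + ‖θB (T-x) * RA * θA (T-x)‖ + ‖QB‖ := by
              gcongr
              exact (norm_add_le _ _).trans (by gcongr; exact norm_add_le _ _)
        _ ≤ b^2*rB⁻¹ + 2*(a*b)*rA⁻¹ + qB*(1+mB^2) := by
              rw [hQBn]; linarith [t1, t2, t3]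
    have hFx : ‖F x‖ = Real.sqrt (‖DA (T-x)‖^2 + ‖DB (T-x)‖^2) := by
      simp only [hFdef]
      rw [hnorm, norm_neg, norm_neg]
    rw [hFx]
    exact sqrt_bound a b _ _ rA⁻¹ rB⁻¹ ρ (qA*(1+mA^2)) (qB*(1+mB^2)) c₂
      (norm_nonneg _) (norm_nonneg _) (by positivity) (by positivity) hxρ hyρ
      (by positivity) (by positivity) hdA hdB (norm_nonneg _) (norm_nonneg _) hSc₂
  -- Grönwall-type comparison for each shift δ
  have main : ∀ δ ∈ Ioo (0:ℝ) δ₀, ∀ s ∈ Icc (0:ℝ) T, ‖f s‖ ≤ γ * Real.tan (ω * s + δ) := by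
    intro δ hδ
    set Bf : ℝ → ℝ := fun s => γ * Real.tan (ω * s + δ) with hBfdef
    set Bf' : ℝ → ℝ := fun s => c₂ + c₂ * Real.tan (ω * s + δ) ^ 2 with hBf'def
    have harg : ∀ s ∈ Icc (0:ℝ) T, 0 < ω * s + δ ∧ ω * s + δ < π / 2 := by
      intro s hs
      constructor
      · have : 0 ≤ ω * s := mul_nonneg hω0.le hs.1
        linarith [hδ.1]
      · have h1 : ω * s ≤ ω * T := mul_le_mul_of_nonneg_left hs.2 hω0.le
        have h2 := hδ.2
        simp only [hδ₀def] at h2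
        linarith
    have hcos : ∀ s ∈ Icc (0:ℝ) T, Real.cos (ω * s + δ) ≠ 0 := by
      intro s hs
      obtain ⟨h1, h2⟩ := harg s hs
      exact (Real.cos_pos_of_mem_Ioo ⟨by linarith [Real.pi_pos], h2⟩).ne'
    have hBd : ∀ s ∈ Icc (0:ℝ) T, HasDerivAt Bf (Bf' s) s := by
      intro s hs
      have hc := hcos s hs
      have h1 : HasDerivAt (fun u : ℝ => ω * u + δ) ω s := by
        simpa using ((hasDerivAt_id s).const_mul ω).add_const δ
      have h2 := ((Real.hasDerivAt_tan hc).comp s h1).const_mul γ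
      convert h2 using 1
      show c₂ + c₂ * Real.tan (ω * s + δ) ^ 2 = _
      have htan : Real.tan (ω * s + δ) ^ 2 + 1 = 1 / Real.cos (ω * s + δ) ^ 2 := by
        rw [Real.tan_eq_sin_div_cos]
        field_simp
        exact Real.sin_sq_add_cos_sq _
      rw [← htan]
      linear_combination (-1 - Real.tan (ω * s + δ) ^ 2) * hγω
      all_goals rfl
    have gron := image_norm_le_of_norm_deriv_right_lt_deriv_boundary'
      (f := f) (f' := F) (a := 0) (b := T) (B := Bf) (B' := Bf')
      (fun s hs => (hF s hs).continuousAt.continuousWithinAt)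
      (fun s hs => (hF s (Ico_subset_Icc_self hs)).hasDerivWithinAt)
      ?ha
      (fun s hs => (hBd s hs).continuousAt.continuousWithinAt)
      (fun s hs => (hBd s (Ico_subset_Icc_self hs)).hasDerivWithinAt)
      ?bound
    · exact fun s hs => gron hs
    case ha =>
      have h0 : ‖f 0‖ = 0 := by
        simp only [hfdef, sub_zero]
        rw [hnorm, htA, htB]
        simp
      rw [h0]
      simp only [hBfdef, mul_zero, zero_add]
      have h := harg 0 ⟨le_refl 0, hT0.le⟩
      simp only [mul_zero, zero_add] at h
      exact mul_nonneg hγ0.le (Real.tan_nonneg_of_nonneg_of_le_pi_div_two h.1.le h.2.le)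
    case bound =>
      intro x hx heq
      have hxI : x ∈ Icc (0:ℝ) T := Ico_subset_Icc_self hx
      obtain ⟨h1, h2⟩ := harg x hxI
      have hBpos : 0 < Bf x := mul_pos hγ0 (Real.tan_pos_of_pos_of_lt_pi_div_two h1 h2)
      have hab : ‖θA (T-x)‖^2 + ‖θB (T-x)‖^2 = (Bf x)^2 := by
        have hfx : ‖f x‖ = Real.sqrt (‖θA (T-x)‖^2 + ‖θB (T-x)‖^2) := by
          simp only [hfdef]; rw [hnorm]
        rw [hfx] at heq
        have h3 := congrArg (· ^ 2) heq
        simpa [Real.sq_sqrt (by positivity : (0:ℝ) ≤ ‖θA (T-x)‖^2 + ‖θB (T-x)‖^2)] using h3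
      have hstep : 0 < ρ * (Bf x)^2 := mul_pos hρ0 (pow_pos hBpos 2)
      calc ‖F x‖ ≤ 3 * ρ * (‖θA (T-x)‖^2 + ‖θB (T-x)‖^2) + c₂ := hDbound x hxI
        _ = 3 * ρ * (Bf x)^2 + c₂ := by rw [hab]
        _ < 5 * ρ * (Bf x)^2 + c₂ := by linarith
        _ = Bf' x := by
            simp only [hBf'def, hBfdef]
            linear_combination (-(Real.tan (ω * x + δ) ^ 2) * γ^2) * hc₁ +
              (Real.tan (ω * x + δ) ^ 2) * hc₁γ2
  -- conclusion: take the limit δ → 0⁺ and bound the tangent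
  intro t ht
  have hs : T - t ∈ Icc (0:ℝ) T := ⟨by linarith [ht.2], by linarith [ht.1]⟩
  have hLHS : Real.sqrt (frobSq (θA t) + frobSq (θB t)) = ‖f (T - t)‖ := by
    simp only [hfdef]
    rw [hnorm, show T - (T - t) = t by ring, sq_norm_eq_frobSq, sq_norm_eq_frobSq]
  rw [hLHS]
  have hargt : 0 ≤ ω * (T - t) ∧ ω * (T - t) < π / 2 := by
    constructor
    · exact mul_nonneg hω0.le (by linarith [ht.2])
    · have : ω * (T - t) ≤ ω * T := mul_le_mul_of_nonneg_left (by linarith [ht.1]) hω0.le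
      linarith
  have hcos0 : Real.cos (ω * (T - t)) ≠ 0 :=
    (Real.cos_pos_of_mem_Ioo ⟨by linarith [Real.pi_pos, hargt.1], hargt.2⟩).ne'
  have htend : Filter.Tendsto (fun δ => γ * Real.tan (ω * (T - t) + δ)) (nhdsWithin 0 (Ioi 0))
      (nhds (γ * Real.tan (ω * (T - t)))) := by
    have hc : ContinuousAt (fun δ : ℝ => γ * Real.tan (ω * (T - t) + δ)) 0 := by
      apply ContinuousAt.mul continuousAt_const
      have h1 : ContinuousAt (fun δ : ℝ => ω * (T - t) + δ) 0 := by fun_prop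
      have h2 : ContinuousAt Real.tan (ω * (T - t) + 0) :=
        Real.continuousAt_tan.2 (by simpa using hcos0)
      exact h2.comp h1
    have h3 : ContinuousWithinAt (fun δ : ℝ => γ * Real.tan (ω * (T - t) + δ)) (Ioi 0) 0 :=
      hc.continuousWithinAt
    simpa [ContinuousWithinAt] using h3
  have hev : ∀ᶠ δ in nhdsWithin 0 (Ioi 0), ‖f (T - t)‖ ≤ γ * Real.tan (ω * (T - t) + δ) := by
    filter_upwards [Ioo_mem_nhdsGT_of_mem (show (0:ℝ) ∈ Ico 0 δ₀ from ⟨le_refl _, hδ₀0⟩)]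
      with δ hδ
    exact main δ hδ (T - t) hs
  have hlim : ‖f (T - t)‖ ≤ γ * Real.tan (ω * (T - t)) := ge_of_tendsto htend hev
  have hmono : Real.tan (ω * (T - t)) ≤ K * γ⁻¹ := by
    have h1 : ω * (T - t) ∈ Ioo (-(π/2)) (π/2) :=
      ⟨by linarith [Real.pi_pos, hargt.1], hargt.2⟩
    have h2 : arctan (K * γ⁻¹) ∈ Ioo (-(π/2)) (π/2) := arctan_mem_Ioo _
    have h3 : ω * (T - t) ≤ arctan (K * γ⁻¹) := by
      have : ω * (T - t) ≤ ω * T := mul_le_mul_of_nonneg_left (by linarith [ht.1]) hω0.le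
      linarith [hωT]
    calc Real.tan (ω * (T - t)) ≤ Real.tan (arctan (K * γ⁻¹)) :=
          Real.strictMonoOn_tan.monotoneOn h1 h2 h3
      _ = K * γ⁻¹ := Real.tan_arctan _
  calc ‖f (T - t)‖ ≤ γ * Real.tan (ω * (T - t)) := hlim
    _ ≤ γ * (K * γ⁻¹) := mul_le_mul_of_nonneg_left hmono hγ0.le
    _ = K := by field_simp
end
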